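/- Let $\widehat{\mathcal{O}}_{X,p}=k[[s,\epsilon]]/(\epsilon^2)$ with nilradical $\widehat{\mathcal{N}}_p=(\epsilon)$, and for $n\ge0$ let $\widehat{\mathcal{I}}_{np}=(\epsilon,s^n)$. Then for any $n,m\ge0$ the cokernel of the restriction map $\mathrm{Hom}(\widehat{\mathcal{I}}_{np},\widehat{\mathcal{I}}_{mp}) \to \mathrm{Hom}(\widehat{\mathcal{N}}_p\widehat{\mathcal{I}}_{np},\widehat{\mathcal{N}}_p\widehat{\mathcal{I}}_{mp})$ is isomorphic as a module to $k[[s]]/(s^{\max\{n-m,0\}})$. -/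

import Mathlib

set_option maxHeartbeats 1000000
set_option synthInstance.maxHeartbeats 400000

/-- The completed local ring `A = k⟦s⟧[ε]/(ε²)` of a ribbon at a closed point. -/
abbrev RibbonLocalRing (k : Type) [Field k] : Type := DualNumber (PowerSeries k)

/-- The nilradical `𝒩 = (ε)` of `A`. -/
noncomputable abbrev ribbonNilradical (k : Type) [Field k] : Ideal (RibbonLocalRing k) :=
  Ideal.span {DualNumber.eps}

/-- The ideal `I_n = (ε, sⁿ)` of the divisor `np` inside the ribbon. -/
noncomputable abbrev ribbonIdeal (k : Type) [Field k] (n : ℕ) : Ideal (RibbonLocalRing k) :=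
  Ideal.span {DualNumber.eps, (TrivSqZeroExt.inl (PowerSeries.X ^ n) : RibbonLocalRing k)}

/-- The submodule `𝒩·I_n` of `A`. -/
noncomputable abbrev ribbonNI (k : Type) [Field k] (n : ℕ) : Ideal (RibbonLocalRing k) :=
  ribbonNilradical k * ribbonIdeal k n

set_option maxRecDepth 10000

open TrivSqZeroExt

variable {k : Type} [Field k]

lemma rib_mul_inr (a : RibbonLocalRing k) (c : PowerSeries k) :
    a * inr c = inr (a.fst * c) := by
  refine TrivSqZeroExt.ext (by simp) (by simp [mul_comm])

lemma rib_mem_I {j : ℕ} {x : RibbonLocalRing k} :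
    x ∈ ribbonIdeal k j ↔ (PowerSeries.X : PowerSeries k) ^ j ∣ x.fst := by
  rw [Ideal.mem_span_pair]
  constructor
  · rintro ⟨a, b, rfl⟩
    refine ⟨b.fst, ?_⟩
    simp [mul_comm]
  · rintro ⟨c, hc⟩
    refine ⟨inl x.snd, inl c, ?_⟩
    refine TrivSqZeroExt.ext ?_ ?_
    · simp [hc, mul_comm]
    · simp

lemma rib_NI_eq (j : ℕ) :
    ribbonNI k j =
      Ideal.span {(inr (PowerSeries.X ^ j) : RibbonLocalRing k)} := by
  apply le_antisymm
  · rw [Ideal.mul_le]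
    intro r hr s hs
    rw [Ideal.mem_span_singleton] at hr ⊢
    obtain ⟨a, rfl⟩ := hr
    obtain ⟨c, hc⟩ := rib_mem_I.1 hs
    refine ⟨inl (a.fst * c), ?_⟩
    refine TrivSqZeroExt.ext ?_ ?_
    · simp
    · simp [hc]
      ring
  · rw [Ideal.span_le]
    intro x hx
    simp only [Set.mem_singleton_iff] at hx
    subst hx
    have : (inr (PowerSeries.X ^ j) : RibbonLocalRing k) =
        DualNumber.eps * inl (PowerSeries.X ^ j) := by
      refine TrivSqZeroExt.ext (by simp) (by simp)
    rw [this]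
    exact Ideal.mul_mem_mul (Ideal.subset_span rfl) (Ideal.subset_span (by simp))

lemma rib_mem_NI {j : ℕ} {x : RibbonLocalRing k} :
    x ∈ ribbonNI k j ↔ x.fst = 0 ∧ (PowerSeries.X : PowerSeries k) ^ j ∣ x.snd := by
  rw [rib_NI_eq, Ideal.mem_span_singleton]
  constructor
  · rintro ⟨t, rfl⟩
    refine ⟨by simp, t.fst, ?_⟩
    simp [mul_comm]
  · rintro ⟨h0, c, hc⟩
    refine ⟨inl c, ?_⟩
    refine TrivSqZeroExt.ext ?_ ?_
    · simp [h0]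
    · simp [hc, mul_comm]

/-- The unique power series `c` with `x = inr (X^j * c)`, for `x ∈ 𝒩·I_j`. -/
noncomputable def ribExtract {j : ℕ} (x : ribbonNI k j) : PowerSeries k :=
  ((rib_mem_NI.1 x.2).2).choose

lemma ribExtract_spec {j : ℕ} (x : ribbonNI k j) :
    (x : RibbonLocalRing k) = inr (PowerSeries.X ^ j * ribExtract x) := by
  have h1 := (rib_mem_NI.1 x.2).1
  have h2 := ((rib_mem_NI.1 x.2).2).choose_spec
  refine TrivSqZeroExt.ext (by simp [h1]) (by rw [snd_inr]; exact h2)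

lemma ribExtract_unique {j : ℕ} (x : ribbonNI k j) (c : PowerSeries k)
    (h : (x : RibbonLocalRing k) = inr (PowerSeries.X ^ j * c)) : ribExtract x = c := by
  have h2 := ribExtract_spec x
  rw [h] at h2
  have := inr_injective h2.symm
  exact mul_left_cancel₀ (pow_ne_zero j PowerSeries.X_ne_zero) this

lemma ribExtract_add {j : ℕ} (x y : ribbonNI k j) :
    ribExtract (x + y) = ribExtract x + ribExtract y := by
  apply ribExtract_unique
  push_cast [ribExtract_spec x, ribExtract_spec y]
  rw [← inr_add, mul_add]

lemma ribExtract_smul {j : ℕ} (a : RibbonLocalRing k) (x : ribbonNI k j) :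
    ribExtract (a • x) = a.fst * ribExtract x := by
  apply ribExtract_unique
  have : ((a • x : ribbonNI k j) : RibbonLocalRing k) = a * (x : RibbonLocalRing k) := rfl
  rw [this, ribExtract_spec x, rib_mul_inr]
  ring_nf

/-- The generator `ε·sʲ` of `𝒩·I_j`. -/
noncomputable def ribGen (k : Type) [Field k] (j : ℕ) : ribbonNI k j :=
  ⟨inr (PowerSeries.X ^ j), by rw [rib_mem_NI]; exact ⟨by simp, by simp⟩⟩

lemma ribExtract_gen (j : ℕ) : ribExtract (ribGen k j) = 1 := by
  apply ribExtract_unique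
  simp [ribGen]

/-- The map `𝒩·I_n → 𝒩·I_m` sending `ε sⁿ u ↦ ε sᵐ b u`. -/
noncomputable def ribPhi (k : Type) [Field k] (n m : ℕ) (b : PowerSeries k) :
    ribbonNI k n →ₗ[RibbonLocalRing k] ribbonNI k m where
  toFun y := ⟨inr (PowerSeries.X ^ m * (b * ribExtract y)),
    by rw [rib_mem_NI]; exact ⟨by simp, Dvd.intro _ rfl⟩⟩
  map_add' x y := Subtype.ext (by
    simp only [ribExtract_add]
    push_cast
    rw [← inr_add]
    ring_nf)
  map_smul' a x := Subtype.ext (by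
    show inr (PowerSeries.X ^ m * (b * ribExtract (a • x))) =
      a * inr (PowerSeries.X ^ m * (b * ribExtract x))
    rw [ribExtract_smul, rib_mul_inr]
    exact congrArg inr (by ring))

lemma ribPhi_extract (n m : ℕ) (b : PowerSeries k) (y : ribbonNI k n) :
    ribExtract (ribPhi k n m b y) = b * ribExtract y := by
  apply ribExtract_unique
  rfl

/-- Multiplication by `inl (X^(max n m - n) * w)` maps `I_n` into `I_m`. -/
noncomputable def ribMul (k : Type) [Field k] (n m : ℕ) (w : PowerSeries k) :
    ribbonIdeal k n →ₗ[RibbonLocalRing k] ribbonIdeal k m where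
  toFun x := ⟨inl (PowerSeries.X ^ (max n m - n) * w) * (x : RibbonLocalRing k), by
    rw [rib_mem_I]
    obtain ⟨c, hc⟩ := rib_mem_I.1 x.2
    have hpow : (PowerSeries.X : PowerSeries k) ^ (max n m - n) * PowerSeries.X ^ n
        = PowerSeries.X ^ (max n m) := by
      rw [← pow_add, Nat.sub_add_cancel (le_max_left n m)]
    have h1 : (inl (PowerSeries.X ^ (max n m - n) * w) *
        (x : RibbonLocalRing k)).fst = PowerSeries.X ^ (max n m) * (w * c) := by
      rw [fst_mul, fst_inl, hc]
      linear_combination (w * c) * hpow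
    rw [h1]
    exact Dvd.dvd.mul_right (pow_dvd_pow _ (le_max_right n m)) _⟩
  map_add' x y := Subtype.ext (by
    show inl (PowerSeries.X ^ (max n m - n) * w) * ((x : RibbonLocalRing k) + (y : RibbonLocalRing k)) = _
    rw [mul_add]
    rfl)
  map_smul' a x := Subtype.ext (by
    show inl (PowerSeries.X ^ (max n m - n) * w) * (a * (x : RibbonLocalRing k))
      = a * (inl (PowerSeries.X ^ (max n m - n) * w) * (x : RibbonLocalRing k))
    ring)


/-- The projection `Hom(𝒩I_n, 𝒩I_m) → A/I_{n-m}`, `f ↦ ribExtract (f (ε sⁿ)) mod I`. -/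
noncomputable def ribPi (k : Type) [Field k] (n m : ℕ) :
    ((ribbonNI k n) →ₗ[RibbonLocalRing k] (ribbonNI k m)) →ₗ[RibbonLocalRing k]
      (RibbonLocalRing k ⧸ ribbonIdeal k (n - m)) where
  toFun f := Submodule.Quotient.mk (inl (ribExtract (f (ribGen k n))))
  map_add' f g := by
    simp only [LinearMap.add_apply, ribExtract_add, inl_add]
    rw [← Submodule.Quotient.mk_add]
  map_smul' a f := by
    simp only [LinearMap.smul_apply, RingHom.id_apply]
    have hE : ribExtract (a • f (ribGen k n)) = a.fst * ribExtract (f (ribGen k n)) :=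
      ribExtract_smul a _
    rw [hE, ← Submodule.Quotient.mk_smul, Submodule.Quotient.eq, rib_mem_I]
    have : ((inl (a.fst * ribExtract (f (ribGen k n))) : RibbonLocalRing k) -
        a • inl (ribExtract (f (ribGen k n)))).fst = 0 := by
      simp [smul_eq_mul]
    rw [this]
    exact dvd_zero _

lemma ribPi_surjective (k : Type) [Field k] (n m : ℕ) :
    Function.Surjective (ribPi k n m) := by
  intro q
  obtain ⟨x, rfl⟩ := Submodule.Quotient.mk_surjective _ q
  refine ⟨ribPhi k n m x.fst, ?_⟩
  show Submodule.Quotient.mk (inl (ribExtract (ribPhi k n m x.fst (ribGen k n)))) = _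
  rw [ribPhi_extract, ribExtract_gen, mul_one, Submodule.Quotient.eq, rib_mem_I]
  have : ((inl x.fst : RibbonLocalRing k) - x).fst = 0 := by simp
  rw [this]
  exact dvd_zero _

lemma ribPi_eq_zero_iff (k : Type) [Field k] (n m : ℕ)
    (f : (ribbonNI k n) →ₗ[RibbonLocalRing k] (ribbonNI k m)) :
    ribPi k n m f = 0 ↔
      (PowerSeries.X : PowerSeries k) ^ (n - m) ∣ ribExtract (f (ribGen k n)) := by
  show Submodule.Quotient.mk (inl (ribExtract (f (ribGen k n)))) = 0 ↔ _
  rw [Submodule.Quotient.mk_eq_zero, rib_mem_I, fst_inl]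

/-- Forward direction: if `ribExtract (f (ε sⁿ)) = X^(n-m) w` then the restriction of
`ribMul k n m w` agrees with `f` pointwise. -/
lemma rib_restrict_eq (k : Type) [Field k] (n m : ℕ) (w : PowerSeries k)
    (f : (ribbonNI k n) →ₗ[RibbonLocalRing k] (ribbonNI k m))
    (hw : ribExtract (f (ribGen k n)) = PowerSeries.X ^ (n - m) * w)
    (y : ribbonNI k n) :
    ((ribMul k n m w ⟨(y : RibbonLocalRing k), Ideal.mul_le_right y.2⟩ :
        ribbonIdeal k m) : RibbonLocalRing k) = ((f y : ribbonNI k m) : RibbonLocalRing k) := by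
  show inl (PowerSeries.X ^ (max n m - n) * w) * (y : RibbonLocalRing k)
    = (f y : RibbonLocalRing k)
  have hpow1 : (PowerSeries.X : PowerSeries k) ^ (max n m - n) * PowerSeries.X ^ n
      = PowerSeries.X ^ (max n m) := by
    rw [← pow_add, Nat.sub_add_cancel (le_max_left n m)]
  have hpow2 : (PowerSeries.X : PowerSeries k) ^ m * PowerSeries.X ^ (n - m)
      = PowerSeries.X ^ (max n m) := by
    rw [← pow_add, show m + (n - m) = max n m from by omega]
  have hgen : ((ribGen k n : ribbonNI k n) : RibbonLocalRing k)
      = inr (PowerSeries.X ^ n) := rfl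
  have hy : y = (inl (ribExtract y) : RibbonLocalRing k) • ribGen k n := by
    apply Subtype.ext
    rw [Submodule.coe_smul, smul_eq_mul, hgen, ribExtract_spec y, inl_mul_inr,
      smul_eq_mul, mul_comm]
  have hy2 : f y = (inl (ribExtract y) : RibbonLocalRing k) • f (ribGen k n) := by
    conv_lhs => rw [hy]
    exact map_smul f _ _
  have hfy : (f y : RibbonLocalRing k)
      = inr (PowerSeries.X ^ (max n m) * (w * ribExtract y)) := by
    rw [hy2, Submodule.coe_smul, smul_eq_mul, ribExtract_spec (f (ribGen k n)), hw,
      inl_mul_inr, smul_eq_mul]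
    exact congrArg inr (by linear_combination (w * ribExtract y) * hpow2)
  rw [hfy, ribExtract_spec y, inl_mul_inr, smul_eq_mul]
  exact congrArg inr (by linear_combination (w * ribExtract y) * hpow1)

/-- Backward direction: a map `g` that is the restriction of some `φ : I_n → I_m`
has `X^(n-m) ∣ ribExtract (g (ε sⁿ))`. -/
lemma rib_dvd_of_restrict (k : Type) [Field k] (n m : ℕ)
    (φ : (ribbonIdeal k n) →ₗ[RibbonLocalRing k] (ribbonIdeal k m))
    (g : (ribbonNI k n) →ₗ[RibbonLocalRing k] (ribbonNI k m))
    (hg : ((g (ribGen k n) : ribbonNI k m) : RibbonLocalRing k) =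
      ((φ ⟨((ribGen k n : ribbonNI k n) : RibbonLocalRing k),
        Ideal.mul_le_right (ribGen k n).2⟩ : ribbonIdeal k m) : RibbonLocalRing k)) :
    (PowerSeries.X : PowerSeries k) ^ (n - m) ∣ ribExtract (g (ribGen k n)) := by
  set e : ribbonIdeal k n := ⟨DualNumber.eps, by rw [rib_mem_I]; simp⟩ with he
  have heps : (DualNumber.eps : RibbonLocalRing k) • e = (0 : ribbonIdeal k n) := by
    apply Subtype.ext
    show (DualNumber.eps : RibbonLocalRing k) * DualNumber.eps = 0
    exact DualNumber.eps_mul_eps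
  have h0 : (φ e : RibbonLocalRing k).fst = 0 := by
    have h1 : (DualNumber.eps : RibbonLocalRing k) • φ e = 0 := by
      rw [← map_smul, heps, map_zero]
    have h2 : DualNumber.eps * (φ e : RibbonLocalRing k) = 0 := by
      have := congrArg (fun z : ribbonIdeal k m => (z : RibbonLocalRing k)) h1
      simpa using this
    have h3 := congrArg TrivSqZeroExt.snd h2
    simpa using h3
  have hsub : (⟨((ribGen k n : ribbonNI k n) : RibbonLocalRing k),
      Ideal.mul_le_right (ribGen k n).2⟩ : ribbonIdeal k n)
      = (inl (PowerSeries.X ^ n) : RibbonLocalRing k) • e := by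
    apply Subtype.ext
    show ((ribGen k n : ribbonNI k n) : RibbonLocalRing k)
      = inl (PowerSeries.X ^ n) * DualNumber.eps
    show (inr (PowerSeries.X ^ n) : RibbonLocalRing k) = _
    refine TrivSqZeroExt.ext (by simp) (by simp)
  have hval : ((g (ribGen k n) : ribbonNI k m) : RibbonLocalRing k)
      = inr (PowerSeries.X ^ n * (φ e : RibbonLocalRing k).snd) := by
    rw [hg, hsub, map_smul]
    show inl (PowerSeries.X ^ n) * (φ e : RibbonLocalRing k) = _
    have hphe : (φ e : RibbonLocalRing k) = inr (φ e : RibbonLocalRing k).snd :=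
      TrivSqZeroExt.ext (by simp [h0]) (by simp)
    conv_lhs => rw [hphe]
    rw [inl_mul_inr, smul_eq_mul]
  have hE : (PowerSeries.X : PowerSeries k) ^ m * ribExtract (g (ribGen k n))
      = PowerSeries.X ^ n * (φ e : RibbonLocalRing k).snd :=
    inr_injective (by rw [← ribExtract_spec, hval])
  rcases le_total n m with h | h
  · rw [Nat.sub_eq_zero_of_le h, pow_zero]
    exact one_dvd _
  · refine ⟨(φ e : RibbonLocalRing k).snd, ?_⟩
    apply mul_left_cancel₀ (pow_ne_zero m PowerSeries.X_ne_zero)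
    rw [hE, ← mul_assoc, ← pow_add, show m + (n - m) = n from by omega]

/-- The cokernel of the restriction map
`Hom(I_n, I_m) → Hom(𝒩·I_n, 𝒩·I_m)`, `φ ↦ φ|_{𝒩 I_n}`, is isomorphic as a module to
`k⟦s⟧/(s^{max(n-m,0)}) = A/(ε, s^{n-m})` (with truncated subtraction `n - m` in `ℕ`);
this is expressed by the existence of a surjective `A`-linear map from
`Hom(𝒩·I_n, 𝒩·I_m)` onto `A/(ε, s^{n-m})` whose kernel is exactly the image of the
restriction map. -/
theorem cokernel_restriction_iso (k : Type) [Field k] (n m : ℕ)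
    (res : ((ribbonIdeal k n) →ₗ[RibbonLocalRing k] (ribbonIdeal k m)) →ₗ[RibbonLocalRing k]
      ((ribbonNI k n) →ₗ[RibbonLocalRing k] (ribbonNI k m)))
    (hres : ∀ (φ : (ribbonIdeal k n) →ₗ[RibbonLocalRing k] (ribbonIdeal k m))
      (x : ribbonNI k n),
      ((res φ x : RibbonLocalRing k)) =
        ((φ ⟨(x : RibbonLocalRing k), Ideal.mul_le_right x.2⟩ : ribbonIdeal k m) :
          RibbonLocalRing k)) :
    ∃ π : ((ribbonNI k n) →ₗ[RibbonLocalRing k] (ribbonNI k m)) →ₗ[RibbonLocalRing k]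
        (RibbonLocalRing k ⧸ ribbonIdeal k (n - m)),
      Function.Surjective π ∧
        ∀ f : (ribbonNI k n) →ₗ[RibbonLocalRing k] (ribbonNI k m),
          π f = 0 ↔ ∃ φ, res φ = f := by
  refine ⟨ribPi k n m, ribPi_surjective k n m, fun f => ?_⟩
  rw [ribPi_eq_zero_iff]
  constructor
  · intro h
    obtain ⟨w, hw⟩ := h
    refine ⟨ribMul k n m w, ?_⟩
    apply LinearMap.ext
    intro y
    apply Subtype.ext
    rw [hres]
    exact rib_restrict_eq k n m w f hw y
  · rintro ⟨φ, rfl⟩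
    exact rib_dvd_of_restrict k n m φ (res φ) (hres φ (ribGen k n))
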